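/- For every primitive vector (p,q) ∈ ℤ² and every k ≥ 1 and primitive vector (r,s) with |ps − qr| = k, there exists A ∈ GL(2,ℤ) with det A = ±1 such that A·(p,q) = (1,0) and A·(r,s) = (x,k) for some integer x with 0 ≤ x < k and gcd(x,k) = 1 (interpret gcd(0,1)=1). -/

import Mathlib

noncomputable section

/-- The flat two-dimensional torus `ℝ²/ℤ²`. -/
abbrev Torus : Type := AddCircle (1 : ℝ) × AddCircle (1 : ℝ)

/-- The quotient projection `ℝ² → ℝ²/ℤ²`. -/
def torusProj (v : ℝ × ℝ) : Torus :=
  ((v.1 : AddCircle (1 : ℝ)), (v.2 : AddCircle (1 : ℝ)))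

/-- A vector `(p, q) ∈ ℤ²` is primitive if `gcd(p, q) = 1`. -/
def IsPrimitive (v : ℤ × ℤ) : Prop := Int.gcd v.1 v.2 = 1

/-- The closed geodesic on the torus through (the class of) `b` in direction `v`. -/
def geodesic (b : ℝ × ℝ) (v : ℤ × ℤ) : Set Torus :=
  Set.range (fun t : ℝ => torusProj (b.1 + t * (v.1 : ℝ), b.2 + t * (v.2 : ℝ)))

/-- The number of connected components of the complement of `S`. -/
def regionCount {X : Type*} [TopologicalSpace X] (S : Set X) : ℕ :=
  Nat.card (ConnectedComponents ↥(Sᶜ))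

/-- An arrangement of `n` distinct closed geodesics, given by base points `b`
and primitive direction vectors `v`. -/
def IsArrangement {n : ℕ} (b : Fin n → ℝ × ℝ) (v : Fin n → ℤ × ℤ) : Prop :=
  (∀ i, IsPrimitive (v i)) ∧ Function.Injective (fun i => geodesic (b i) (v i))

/-- Two geodesics are parallel iff their homology classes agree up to sign. -/
def Parallel (v w : ℤ × ℤ) : Prop := v = w ∨ v = -w

/-- Normal form lemma: a primitive pair `(p,q)`, `(r,s)` with `|ps - qr| = k ≥ 1`
can be taken by some `A ∈ GL(2,ℤ)` to `(1,0)` and `(x,k)` with `0 ≤ x < k`,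
`gcd(x,k) = 1`. -/
theorem stmt5 (p q r s : ℤ) (k : ℕ) (hk : 1 ≤ k)
    (h1 : Int.gcd p q = 1) (h2 : Int.gcd r s = 1)
    (hd : (p * s - q * r).natAbs = k) :
    ∃ (A : Matrix (Fin 2) (Fin 2) ℤ) (x : ℤ),
      (A.det = 1 ∨ A.det = -1) ∧
      A.mulVec ![p, q] = ![1, 0] ∧
      A.mulVec ![r, s] = ![x, (k : ℤ)] ∧
      0 ≤ x ∧ x < (k : ℤ) ∧ Int.gcd x k = 1 := by
  obtain ⟨a, b, hab⟩ := (Int.isCoprime_iff_gcd_eq_one.mpr h1)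
  set d : ℤ := p * s - q * r with hd_def
  have hk0 : (0:ℤ) < k := by exact_mod_cast hk
  set ε : ℤ := if 0 ≤ d then 1 else -1 with hε
  have hεd : ε * d = k := by
    rcases le_or_gt 0 d with h | h
    · simp [hε, h]; omega
    · simp [hε, not_le.mpr h]; omega
  have hε2 : ε * ε = 1 := by
    rcases le_or_gt 0 d with h | h
    · simp [hε, h]
    · simp [hε, not_le.mpr h]
  set m : ℤ := a * r + b * s with hm
  set t : ℤ := -(m / k) with ht
  set x : ℤ := m % k with hx
  have hxm : x = m + t * k := by
    have := Int.emod_add_mul_ediv m k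
    rw [hx, ht]; linarith
  have h1' : (a + t*ε*(-q)) * r + (b + t*ε*p) * s = x := by
    rw [hxm]; linear_combination t * hεd
  have h2' : (ε*(-q)) * r + (ε*p) * s = (k:ℤ) := by linear_combination hεd
  refine ⟨![![a + t * ε * (-q), b + t * ε * p], ![ε * (-q), ε * p]], x, ?_, ?_, ?_, ?_, ?_, ?_⟩
  · rcases le_or_gt 0 d with h | h
    · left; erw [Matrix.det_fin_two]; simp [Matrix.det_fin_two, hε, h]; linear_combination hab
    · right; erw [Matrix.det_fin_two]; simp [Matrix.det_fin_two, hε, not_le.mpr h]; linear_combination -hab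
  · funext i; fin_cases i
    · simp [Matrix.mulVec, dotProduct, Fin.sum_univ_two]
      linear_combination hab
    · simp [Matrix.mulVec, dotProduct, Fin.sum_univ_two]
      ring
  · funext i; fin_cases i
    · simpa [Matrix.mulVec, dotProduct, Fin.sum_univ_two] using h1'
    · simpa [Matrix.mulVec, dotProduct, Fin.sum_univ_two] using h2'
  · exact Int.emod_nonneg m (by positivity)
  · exact Int.emod_lt_of_pos m hk0
  · have hgr : (Int.gcd x k : ℤ) ∣ r := by
      have : r = ε * ((ε*p) * x - (b + t*ε*p) * (k:ℤ)) := by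
        linear_combination (ε*ε*p)*h1' - (ε*(b+t*ε*p))*h2' - (ε*ε*r)*hab - r*hε2
      rw [this]
      exact Dvd.dvd.mul_left (dvd_sub ((Int.gcd_dvd_left _ _).mul_left _) ((Int.gcd_dvd_right _ _).mul_left _)) ε
    have hgs : (Int.gcd x k : ℤ) ∣ s := by
      have : s = ε * ((a + t*ε*(-q)) * (k:ℤ) + (ε*q) * x) := by
        linear_combination (ε*ε*q)*h1' + (ε*(a+t*ε*(-q)))*h2' - (ε*ε*s)*hab - s*hε2
      rw [this]
      exact Dvd.dvd.mul_left (dvd_add ((Int.gcd_dvd_right _ _).mul_left _) ((Int.gcd_dvd_left _ _).mul_left _)) ε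
    have hdvd : (Int.gcd x k : ℤ) ∣ (Int.gcd r s : ℤ) := by exact_mod_cast Int.dvd_gcd hgr hgs
    rw [h2] at hdvd
    exact Nat.dvd_one.mp (by exact_mod_cast hdvd)
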